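/- Let (R,m) be a d-dimensional Noetherian local ring, J a parameter ideal, and F = {J_n} a J-admissible filtration. Set A = R[Jt], B = ⨁_{n≥0} J_n t^n, and M = B/A = ⨁_{n≥1} J_n/J^n. If ht(A :_A B) = 1, then e_1(F) ≤ e_1(J) + Σ_{n≥1} λ(J_n / J·J_{n−1}). -/

import Mathlib

/-- `HasLength R M n` : the `R`-module `M` has finite length `n`. -/
def HasLength (R M : Type*) [Ring R] [AddCommGroup M] [Module R M] (n : ℕ) : Prop :=
  ∃ s : CompositionSeries (Submodule R M), s.head = ⊥ ∧ s.last = ⊤ ∧ s.length = n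

set_option maxHeartbeats 1000000

section
variable {R M N : Type*} [Ring R] [AddCommGroup M] [Module R M] [AddCommGroup N] [Module R N]

theorem hasLength_unique {m n : ℕ} (hm : HasLength R M m) (hn : HasLength R M n) : m = n := by
  obtain ⟨s, hs1, hs2, hs3⟩ := hm
  obtain ⟨t, ht1, ht2, ht3⟩ := hn
  have := (CompositionSeries.jordan_holder s t (hs1.trans ht1.symm) (hs2.trans ht2.symm)).length_eq
  omega

theorem exists_hasLength (h : IsFiniteLength R M) : ∃ n, HasLength R M n := by
  obtain ⟨s, h1, h2⟩ := isFiniteLength_iff_exists_compositionSeries.mp h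
  exact ⟨s.length, s, h1, h2, rfl⟩

theorem HasLength.isFiniteLength {n : ℕ} (h : HasLength R M n) : IsFiniteLength R M := by
  obtain ⟨s, h1, h2, _⟩ := h
  exact isFiniteLength_of_exists_compositionSeries ⟨s, h1, h2⟩

theorem hasLength_congr (e : M ≃ₗ[R] N) {n : ℕ} (h : HasLength R M n) : HasLength R N n := by
  obtain ⟨s, h1, h2, h3⟩ := h
  let f : Submodule R M ≃o Submodule R N := Submodule.orderIsoMapComap e
  refine ⟨s.map ⟨f, fun {a b} hab => (apply_covBy_apply_iff f).mpr hab⟩, ?_, ?_, ?_⟩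
  · show f s.head = ⊥
    rw [h1]; exact map_bot f
  · show f s.last = ⊤
    rw [h2]; exact map_top f
  · simpa using h3

theorem covBy_map_subtype (Np : Submodule R M) {p q : Submodule R Np} (h : p ⋖ q) :
    p.map Np.subtype ⋖ q.map Np.subtype := by
  have inj := Np.injective_subtype
  constructor
  · exact Submodule.map_strictMono_of_injective inj h.lt
  · intro c hc1 hc2
    have hcN : c ≤ Np := le_trans hc2.le (by simpa using Submodule.map_subtype_le Np q)
    have hc : (Submodule.comap Np.subtype c).map Np.subtype = c := by
      rw [Submodule.map_comap_subtype, inf_eq_right.mpr hcN]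
    set c' := Submodule.comap Np.subtype c with hc'
    have h1 : p < c' := by
      refine lt_of_le_of_ne ?_ ?_
      · rw [← Submodule.comap_map_eq_of_injective inj p]
        exact Submodule.comap_mono hc1.le
      · rintro rfl; exact hc1.ne hc
    have h2 : c' < q := by
      refine lt_of_le_of_ne ?_ ?_
      · rw [← Submodule.comap_map_eq_of_injective inj q]
        exact Submodule.comap_mono hc2.le
      · rintro rfl; exact hc2.ne' hc
    exact h.2 h1 h2

theorem covBy_comap_mkQ (Np : Submodule R M) {p q : Submodule R (M ⧸ Np)} (h : p ⋖ q) :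
    p.comap Np.mkQ ⋖ q.comap Np.mkQ := by
  have surj := Np.mkQ_surjective
  constructor
  · exact Submodule.comap_strictMono_of_surjective surj h.lt
  · intro c hc1 hc2
    have hcmap : (Submodule.map Np.mkQ c).comap Np.mkQ = c := by
      have hNple : Np ≤ Submodule.comap Np.mkQ p := by
        intro z hz
        have hz0 : Np.mkQ z = 0 := (Submodule.Quotient.mk_eq_zero Np).mpr hz
        rw [Submodule.mem_comap, hz0]; exact p.zero_mem
      rw [Submodule.comap_map_eq, Submodule.ker_mkQ, sup_eq_left.mpr (le_trans hNple hc1.le)]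
    set c' := Submodule.map Np.mkQ c with hc'
    have h1 : p < c' := by
      refine lt_of_le_of_ne ?_ ?_
      · rw [← Submodule.map_comap_eq_of_surjective surj p]
        exact Submodule.map_mono hc1.le
      · rintro rfl; exact hc1.ne hcmap
    have h2 : c' < q := by
      refine lt_of_le_of_ne ?_ ?_
      · rw [← Submodule.map_comap_eq_of_surjective surj q]
        exact Submodule.map_mono hc2.le
      · rintro rfl; exact hc2.ne' hcmap
    exact h.2 h1 h2

theorem hasLength_add (Np : Submodule R M) {a b : ℕ} (ha : HasLength R Np a)
    (hb : HasLength R (M ⧸ Np) b) : HasLength R M (a + b) := by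
  obtain ⟨s, s1, s2, s3⟩ := ha
  obtain ⟨t, t1, t2, t3⟩ := hb
  let s' : CompositionSeries (Submodule R M) :=
    s.map ⟨Submodule.map Np.subtype, fun {x y} hxy => covBy_map_subtype Np hxy⟩
  let t' : CompositionSeries (Submodule R M) :=
    t.map ⟨Submodule.comap Np.mkQ, fun {x y} hxy => covBy_comap_mkQ Np hxy⟩
  have hconn : s'.last = t'.head := by
    show Submodule.map Np.subtype s.last = Submodule.comap Np.mkQ t.head
    rw [s2, t1]
    simp [Submodule.comap_bot, Submodule.ker_mkQ, Submodule.map_top, Submodule.range_subtype]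
  refine ⟨s'.smash t' hconn, ?_, ?_, ?_⟩
  · rw [RelSeries.head_smash]
    show Submodule.map Np.subtype s.head = ⊥
    rw [s1]; exact Submodule.map_bot _
  · rw [RelSeries.last_smash]
    show Submodule.comap Np.mkQ t.last = ⊤
    rw [t2]; exact Submodule.comap_top _
  · show s'.length + t'.length = a + b
    show s.length + t.length = a + b
    rw [s3, t3]

theorem hasLength_decomp (Np : Submodule R M) {c : ℕ} (hM : HasLength R M c) :
    ∃ a b, HasLength R Np a ∧ HasLength R (M ⧸ Np) b ∧ c = a + b := by
  obtain ⟨hNoe, hArt⟩ := isFiniteLength_iff_isNoetherian_isArtinian.mp hM.isFiniteLength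
  haveI := hNoe; haveI := hArt
  obtain ⟨a, ha⟩ := exists_hasLength
    (isFiniteLength_iff_isNoetherian_isArtinian.mpr ⟨inferInstance, inferInstance⟩ :
      IsFiniteLength R Np)
  obtain ⟨b, hb⟩ := exists_hasLength
    (isFiniteLength_iff_isNoetherian_isArtinian.mpr ⟨inferInstance, inferInstance⟩ :
      IsFiniteLength R (M ⧸ Np))
  exact ⟨a, b, ha, hb, hasLength_unique hM (hasLength_add Np ha hb)⟩

theorem hasLength_le_of_surjective (f : M →ₗ[R] N) (hf : Function.Surjective f) {c b : ℕ}
    (hM : HasLength R M c) (hN : HasLength R N b) : b ≤ c := by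
  obtain ⟨a, b', ha, hb', hab⟩ := hasLength_decomp (LinearMap.ker f) hM
  have := hasLength_congr (f.quotKerEquivOfSurjective hf) hb'
  have := hasLength_unique hN this
  omega
end

section IdealLayer
variable {R : Type*} [CommRing R]

theorem idealLen_sub_add {I I' : Ideal R} (h : I ≤ I') {a b : ℕ} (ha : HasLength R (R ⧸ I) a)
    (hb : HasLength R (R ⧸ I') b) :
    ∃ g, HasLength R ↥(Submodule.map I.mkQ I') g ∧ a = g + b := by
  obtain ⟨g, b', hg, hb', hab⟩ := hasLength_decomp (Submodule.map I.mkQ I') ha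
  have e := Submodule.quotientQuotientEquivQuotient I I' h
  have := hasLength_unique hb (hasLength_congr e hb')
  exact ⟨g, hg, by omega⟩

theorem idealLen_exists_of_le {I I' : Ideal R} (h : I ≤ I') {a : ℕ}
    (ha : HasLength R (R ⧸ I) a) : ∃ b ≤ a, HasLength R (R ⧸ I') b := by
  obtain ⟨g, b', _, hb', hab⟩ := hasLength_decomp (Submodule.map I.mkQ I') ha
  have e := Submodule.quotientQuotientEquivQuotient I I' h
  exact ⟨b', by omega, hasLength_congr e hb'⟩

theorem idealLen_le_of_le {I I' : Ideal R} (h : I ≤ I') {a b : ℕ}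
    (ha : HasLength R (R ⧸ I) a) (hb : HasLength R (R ⧸ I') b) : b ≤ a := by
  obtain ⟨b', hb', hbb⟩ := idealLen_exists_of_le h ha
  have := hasLength_unique hb hbb
  omega

theorem step_len {t : R} {P Q B : Ideal R} (hQP : Q ≤ P) (htQB : Ideal.span {t} * Q ≤ B)
    {β β' p q : ℕ} (hB : HasLength R (R ⧸ B) β)
    (hB' : HasLength R (R ⧸ (B ⊔ Ideal.span {t} * P)) β')
    (hP : HasLength R (R ⧸ P) p) (hQ : HasLength R (R ⧸ Q) q) :
    β + p ≤ β' + q := by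
  obtain ⟨g, hg, hβg⟩ := idealLen_sub_add (le_sup_left : B ≤ B ⊔ Ideal.span {t} * P) hB hB'
  obtain ⟨y, hy, hqy⟩ := idealLen_sub_add hQP hQ hP
  -- the multiplication-by-t map
  set ψ : ↥P →ₗ[R] R ⧸ B := B.mkQ ∘ₗ (t • P.subtype) with hψ
  have hrange : LinearMap.range ψ = Submodule.map B.mkQ (B ⊔ Ideal.span {t} * P) := by
    have h1 : LinearMap.range (t • P.subtype) = Ideal.span {t} * P := by
      ext z
      simp only [LinearMap.mem_range, LinearMap.smul_apply, Submodule.coe_subtype,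
        Ideal.mem_span_singleton_mul]
      constructor
      · rintro ⟨⟨w, hw⟩, rfl⟩; exact ⟨w, hw, rfl⟩
      · rintro ⟨w, hw, rfl⟩; exact ⟨⟨w, hw⟩, rfl⟩
    have h2 : Submodule.map B.mkQ B = ⊥ := by
      rw [eq_bot_iff]
      rintro z ⟨w, hw, rfl⟩
      simp only [Submodule.mem_bot, Submodule.mkQ_apply]
      exact (Submodule.Quotient.mk_eq_zero B).mpr hw
    rw [hψ, LinearMap.range_comp, h1, Submodule.map_sup, h2, bot_sup_eq]
  have hker : Submodule.comap P.subtype Q ≤ LinearMap.ker ψ := by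
    intro z hz
    have hzQ : (z : R) ∈ Q := hz
    have : t * (z : R) ∈ B := htQB (Ideal.mul_mem_mul (Ideal.subset_span rfl) hzQ)
    simp only [hψ, LinearMap.mem_ker, LinearMap.comp_apply, LinearMap.smul_apply,
      Submodule.coe_subtype, Submodule.mkQ_apply, smul_eq_mul]
    exact (Submodule.Quotient.mk_eq_zero B).mpr this
  -- HasLength of ↥P ⧸ comap = y
  have hYeq : LinearMap.range (Q.mkQ ∘ₗ P.subtype) = Submodule.map Q.mkQ P := by
    rw [LinearMap.range_comp, Submodule.range_subtype]
  have hYker : LinearMap.ker (Q.mkQ ∘ₗ P.subtype) = Submodule.comap P.subtype Q := by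
    rw [LinearMap.ker_comp, Submodule.ker_mkQ]
  have e₂ : (↥P ⧸ Submodule.comap P.subtype Q) ≃ₗ[R] ↥(Submodule.map Q.mkQ P) := by
    rw [← hYker]
    exact (Q.mkQ ∘ₗ P.subtype).quotKerEquivRange.trans (LinearEquiv.ofEq _ _ hYeq)
  have hPQc : HasLength R (↥P ⧸ Submodule.comap P.subtype Q) y := hasLength_congr e₂.symm hy
  -- HasLength of ↥P ⧸ ker ψ = g
  have e₃ : (↥P ⧸ LinearMap.ker ψ) ≃ₗ[R] ↥(Submodule.map B.mkQ (B ⊔ Ideal.span {t} * P)) :=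
    ψ.quotKerEquivRange.trans (LinearEquiv.ofEq _ _ hrange)
  have hPker : HasLength R (↥P ⧸ LinearMap.ker ψ) g := hasLength_congr e₃.symm hg
  -- surjection (↥P ⧸ comap) → (↥P ⧸ ker ψ)
  have hsurj : Function.Surjective
      (Submodule.mapQ (Submodule.comap P.subtype Q) (LinearMap.ker ψ) LinearMap.id hker) := by
    intro z
    obtain ⟨w, rfl⟩ := Submodule.mkQ_surjective _ z
    exact ⟨Submodule.Quotient.mk w, by rw [Submodule.mapQ_apply]; rfl⟩
  have hgy : g ≤ y := hasLength_le_of_surjective _ hsurj hPQc hPker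
  omega

end IdealLayer

section Monomials
variable {R : Type*} [CommRing R]

theorem multiset_prod_mem_pow (J : Ideal R) {ι : Type*} (x : ι → R)
    (hx : ∀ i, x i ∈ J) (m : Multiset ι) : (m.map x).prod ∈ J ^ (Multiset.card m) := by
  induction m using Multiset.induction_on with
  | empty => simp [Ideal.one_eq_top]
  | cons a m ih =>
    rw [Multiset.map_cons, Multiset.prod_cons, Multiset.card_cons, pow_succ, mul_comm (J ^ _) J]
    exact Ideal.mul_mem_mul (hx a) ih

theorem exists_monomial_span (d : ℕ) (hd : 1 ≤ d) (x : Fin d → R) (a : ℕ) :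
    ∃ T : Finset R, (↑T : Set R) ⊆ ((Ideal.span (Set.range x)) ^ a : Ideal R) ∧
      Ideal.span (↑T : Set R) = (Ideal.span (Set.range x)) ^ a ∧
      T.card ≤ (a + d - 1).choose (d - 1) := by
  classical
  set J := Ideal.span (Set.range x) with hJ
  have hxJ : ∀ i, x i ∈ J := fun i => Ideal.subset_span ⟨i, rfl⟩
  have hmem : ∀ (c : ℕ) (m : Sym (Fin d) c), ((m : Multiset (Fin d)).map x).prod ∈ J ^ c := by
    intro c m
    have := multiset_prod_mem_pow J x hxJ (m : Multiset (Fin d))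
    rwa [Sym.card_coe] at this
  refine ⟨Finset.image (fun m : Sym (Fin d) a => ((m : Multiset (Fin d)).map x).prod)
    Finset.univ, ?_, ?_, ?_⟩
  · intro z hz
    simp only [Finset.coe_image, Set.mem_image] at hz
    obtain ⟨m, _, rfl⟩ := hz
    exact hmem a m
  · induction a with
    | zero =>
      refine le_antisymm ?_ ?_
      · rw [pow_zero, Ideal.one_eq_top]; exact le_top
      · rw [pow_zero, Ideal.one_eq_top, top_le_iff, Ideal.eq_top_iff_one]
        refine Ideal.subset_span ?_
        have h2 : ((((Sym.nil : Sym (Fin d) 0) : Multiset (Fin d)).map x).prod : R) = 1 := by simp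
        refine Set.mem_of_eq_of_mem h2.symm ?_
        exact_mod_cast Finset.mem_image_of_mem _ (Finset.mem_univ (Sym.nil : Sym (Fin d) 0))
    | succ b ih =>
      refine le_antisymm ?_ ?_
      · rw [Ideal.span_le]
        intro z hz
        simp only [Finset.coe_image, Set.mem_image] at hz
        obtain ⟨m, _, rfl⟩ := hz
        exact hmem (b+1) m
      · rw [pow_succ, ← ih, hJ, Ideal.span_mul_span]
        rw [Ideal.span_le]
        intro z hz
        rw [Set.mem_mul] at hz
        obtain ⟨s, hs, t, ht, rfl⟩ := hz
        rw [Finset.mem_coe, Finset.mem_image] at hs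
        obtain ⟨m, _, rfl⟩ := hs
        obtain ⟨i, rfl⟩ := ht
        have hcons : ((((i ::ₛ m) : Sym (Fin d) (b+1)) : Multiset (Fin d)).map x).prod
            = ((m : Multiset (Fin d)).map x).prod * x i := by
          rw [Sym.coe_cons, Multiset.map_cons, Multiset.prod_cons, mul_comm]
        refine Ideal.subset_span ?_
        refine Set.mem_of_eq_of_mem hcons.symm ?_
        exact_mod_cast Finset.mem_image_of_mem _ (Finset.mem_univ (i ::ₛ m))
  · calc (Finset.image _ Finset.univ).card ≤ (Finset.univ : Finset (Sym (Fin d) a)).card :=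
          Finset.card_image_le
    _ = Fintype.card (Sym (Fin d) a) := Finset.card_univ
    _ = (d + a - 1).choose a := by
          rw [Sym.card_sym_eq_multichoose, Fintype.card_fin, Nat.multichoose_eq]
    _ = (a + d - 1).choose (d - 1) := by
          have h1 : d - 1 ≤ a + d - 1 := by omega
          have h2 : a + d - 1 - (d - 1) = a := by omega
          have := Nat.choose_symm h1
          rw [h2] at this
          rw [Nat.add_comm d a, ← this]
end Monomials

section Numeric

theorem choose_diag_mono (n : ℕ) : ∀ {k k' : ℕ}, k ≤ k' → (n + k).choose k ≤ (n + k').choose k' := by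
  intro k k' h
  induction k' with
  | zero => interval_cases k; omega
  | succ m ih =>
    rcases Nat.eq_or_lt_of_le h with rfl | hlt
    · exact le_refl _
    · have h1 : (n + m).choose m ≤ (n + (m+1)).choose (m+1) := by
        rw [show n + (m+1) = (n + m) + 1 by omega, Nat.choose_succ_succ]
        omega
      exact le_trans (ih (by omega)) h1

theorem keyD (e : ℕ) (c : ℕ → ℤ) (M : ℕ)
    (h : ∀ n ≥ M, 0 ≤ ∑ i ∈ Finset.range (e+1), c i * (((n + e - i).choose (e - i) : ℕ) : ℤ)) :
    0 ≤ c 0 := by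
  rcases Nat.eq_zero_or_pos e with rfl | he
  · have := h M le_rfl; simpa using this
  · by_contra hc
    push_neg at hc
    set B : ℤ := ∑ i ∈ Finset.range (e+1), |c i| with hB
    have hB0 : 0 ≤ B := Finset.sum_nonneg (fun i _ => abs_nonneg _)
    set n := M + (e * B).toNat + 1 with hn
    have hbound := h n (by omega)
    have h0mem : (0 : ℕ) ∈ Finset.range (e+1) := Finset.mem_range.mpr (by omega)
    rw [← Finset.sum_erase_add _ _ h0mem] at hbound
    have hterm : ∀ i ∈ (Finset.range (e+1)).erase 0,
        c i * (((n + e - i).choose (e - i) : ℕ) : ℤ) ≤ |c i| * (((n + e - 1).choose (e - 1) : ℕ) : ℤ) := by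
      intro i hi
      have hi0 : i ≠ 0 := (Finset.mem_erase.mp hi).1
      have hie : i ≤ e := by
        have := Finset.mem_range.mp (Finset.mem_erase.mp hi).2; omega
      have hcc : ((n + e - i).choose (e - i) : ℕ) ≤ (n + e - 1).choose (e - 1) := by
        have h1 : n + e - i = n + (e - i) := by omega
        have h2 : n + e - 1 = n + (e - 1) := by omega
        rw [h1, h2]
        exact choose_diag_mono n (by omega)
      calc c i * (((n + e - i).choose (e - i) : ℕ) : ℤ)
          ≤ |c i| * (((n + e - i).choose (e - i) : ℕ) : ℤ) := by
            apply mul_le_mul_of_nonneg_right (le_abs_self _) (by positivity)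
        _ ≤ |c i| * (((n + e - 1).choose (e - 1) : ℕ) : ℤ) := by
            apply mul_le_mul_of_nonneg_left (by exact_mod_cast hcc) (abs_nonneg _)
    have hsum : ∑ i ∈ (Finset.range (e+1)).erase 0, c i * (((n + e - i).choose (e - i) : ℕ) : ℤ)
        ≤ B * (((n + e - 1).choose (e - 1) : ℕ) : ℤ) := by
      calc ∑ i ∈ (Finset.range (e+1)).erase 0, c i * (((n + e - i).choose (e - i) : ℕ) : ℤ)
          ≤ ∑ i ∈ (Finset.range (e+1)).erase 0, |c i| * (((n + e - 1).choose (e - 1) : ℕ) : ℤ) :=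
            Finset.sum_le_sum hterm
        _ = (∑ i ∈ (Finset.range (e+1)).erase 0, |c i|) * (((n + e - 1).choose (e - 1) : ℕ) : ℤ) :=
            (Finset.sum_mul _ _ _).symm
        _ ≤ B * (((n + e - 1).choose (e - 1) : ℕ) : ℤ) := by
            apply mul_le_mul_of_nonneg_right _ (by positivity)
            rw [hB]
            exact Finset.sum_le_sum_of_subset_of_nonneg (Finset.erase_subset _ _)
              (fun i _ _ => abs_nonneg _)
    have hc0 : c 0 * (((n + e - 0).choose (e - 0) : ℕ) : ℤ) ≤ -(((n + e).choose e : ℕ) : ℤ) := by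
      simp only [Nat.sub_zero]
      have : c 0 ≤ -1 := by omega
      nlinarith [Nat.choose_pos (show e ≤ n + e by omega), (by positivity : (0:ℤ) ≤ (((n+e).choose e : ℕ) : ℤ))]
    have hkey : (((n + e).choose e : ℕ) : ℤ) ≤ B * (((n + e - 1).choose (e - 1) : ℕ) : ℤ) := by
      omega
    -- identity : e * C(n+e, e) = (n+e) * C(n+e-1, e-1)
    have hid : (n + e) * ((n + e - 1).choose (e - 1)) = ((n + e).choose e) * e := by
      have := Nat.add_one_mul_choose_eq (n + e - 1) (e - 1)
      have h1 : n + e - 1 + 1 = n + e := by omega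
      have h2 : e - 1 + 1 = e := by omega
      rw [h1, h2] at this
      exact this
    have hpos : (0:ℤ) < (((n + e - 1).choose (e - 1) : ℕ) : ℤ) := by
      exact_mod_cast Nat.choose_pos (show e - 1 ≤ n + e - 1 by omega)
    have hfin : ((n : ℤ) + e) * (((n + e - 1).choose (e - 1) : ℕ) : ℤ)
        ≤ (e * B) * (((n + e - 1).choose (e - 1) : ℕ) : ℤ) := by
      have hcast : ((n : ℤ) + e) * (((n + e - 1).choose (e - 1) : ℕ) : ℤ)
          = (((n + e).choose e : ℕ) : ℤ) * e := by exact_mod_cast hid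
      calc ((n : ℤ) + e) * (((n + e - 1).choose (e - 1) : ℕ) : ℤ)
          = (((n + e).choose e : ℕ) : ℤ) * e := hcast
        _ ≤ (B * (((n + e - 1).choose (e - 1) : ℕ) : ℤ)) * e := by
            apply mul_le_mul_of_nonneg_right hkey (by positivity)
        _ = (e * B) * (((n + e - 1).choose (e - 1) : ℕ) : ℤ) := by ring
    have hne : (n : ℤ) + e ≤ e * B := le_of_mul_le_mul_right hfin hpos
    have := Int.self_le_toNat (↑e * B)
    omega

end Numeric

section LenA
variable {R : Type*} [CommRing R]

theorem lenA {P Q : Ideal R} (hQP : Q ≤ P) {p q : ℕ}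
    (hP : HasLength R (R ⧸ P) p) (hQ : HasLength R (R ⧸ Q) q) (T : Finset R) :
    ∀ (B : Ideal R), (∀ t ∈ T, Ideal.span {t} * Q ≤ B) →
    ∀ {β β' : ℕ}, HasLength R (R ⧸ B) β →
      HasLength R (R ⧸ (B ⊔ Ideal.span (↑T : Set R) * P)) β' →
      β + T.card * p ≤ β' + T.card * q := by
  classical
  induction T using Finset.induction_on with
  | empty =>
    intro B _ β β' hB hB'
    have heq : B ⊔ Ideal.span (↑(∅ : Finset R) : Set R) * P = B := by
      simp [Ideal.span_empty]
    rw [heq] at hB'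
    have := hasLength_unique hB hB'
    simp [this]
  | @insert a T ha ih =>
    intro B hTB β β' hB hB'
    have hB1le : B ≤ B ⊔ Ideal.span (↑T : Set R) * P := le_sup_left
    obtain ⟨β₁, _, hB₁⟩ := idealLen_exists_of_le hB1le hB
    have h1 := ih B (fun t ht => hTB t (Finset.mem_insert_of_mem ht)) hB hB₁
    have heq : (B ⊔ Ideal.span (↑T : Set R) * P) ⊔ Ideal.span {a} * P
        = B ⊔ Ideal.span (↑(insert a T) : Set R) * P := by
      rw [Finset.coe_insert, Set.insert_eq, Ideal.span_union, Submodule.sup_mul]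
      rw [sup_assoc, sup_comm (Ideal.span {a} * P) _]
    have h2 : β₁ + p ≤ β' + q := by
      refine step_len (t := a) hQP ?_ hB₁ ?_ hP hQ
      · exact le_trans (hTB a (Finset.mem_insert_self a T)) hB1le
      · rw [heq]; exact hB'
    have hcard : (insert a T).card = T.card + 1 := Finset.card_insert_of_notMem ha
    rw [hcard]
    have e1 : (T.card + 1) * p = T.card * p + p := by ring
    have e2 : (T.card + 1) * q = T.card * q + q := by ring
    omega
end LenA
/-- Let `(R, m)` be a `d`-dimensional Noetherian local ring, `J` a parameter
ideal, and `F = {Jₙ}` a `J`-admissible filtration.  Let `A = R[Jt]` (the Rees algebra of `J`),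
`B = ⨁ₙ Jₙ tⁿ` (realized as the subalgebra of `R[t]` of polynomials whose `n`-th coefficient
lies in `Jₙ`), and let `C = (A :_A B)` be the conductor.  If `ht C = 1`
(the height being the infimum of `Order.height` over primes of `A` containing `C`), then
`e₁(F) ≤ e₁(J) + ∑_{n ≥ 1} λ(Jₙ / J·J_{n−1})`; here `λ(Jₙ/J J_{n−1}) = λ(R/J Jₙ₋₁) − λ(R/Jₙ)`
and the sum is finite since `Jₙ = J·Jₙ₋₁` for `n > N`. -/
theorem chern_number_filtration_bound {R : Type*} [CommRing R] [IsNoetherianRing R]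
    [IsLocalRing R]
    (d : ℕ) (hd : 1 ≤ d) (hdim : ringKrullDim R = d)
    (x : Fin d → R) (hx : ∀ i, x i ∈ IsLocalRing.maximalIdeal R)
    (J : Ideal R) (hJ : J = Ideal.span (Set.range x))
    (hJlen : ∃ l : ℕ, HasLength R (R ⧸ J) l)
    (F : ℕ → Ideal R) (hF0 : F 0 = ⊤) (hFmono : ∀ n, F (n + 1) ≤ F n)
    (hFmul : ∀ m n, F m * F n ≤ F (m + n))
    (hadm₁ : ∀ n, J ^ n ≤ F n) (hadm₂ : ∃ k, ∀ n, F (n + k) ≤ J ^ n)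
    (B : Subalgebra R (Polynomial R))
    (hB : ∀ p : Polynomial R, p ∈ B ↔ ∀ n, p.coeff n ∈ F n)
    (C : Ideal (reesAlgebra J))
    (hC : ∀ a : reesAlgebra J, a ∈ C ↔ ∀ b ∈ B, (a : Polynomial R) * b ∈ reesAlgebra J)
    (hht : sInf {h : ℕ∞ | ∃ P : PrimeSpectrum (reesAlgebra J),
      C ≤ P.asIdeal ∧ h = Order.height P} = 1)
    (lF lJ lJF : ℕ → ℕ)
    (hlF : ∀ n, HasLength R (R ⧸ F n) (lF n))
    (hlJ : ∀ n, HasLength R (R ⧸ J ^ n) (lJ n))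
    (hlJF : ∀ n, HasLength R (R ⧸ (J * F n)) (lJF n))
    (eF eJ : ℕ → ℤ) (n0 : ℕ)
    (heF : ∀ n ≥ n0, (lF (n + 1) : ℤ) =
      ∑ i ∈ Finset.range (d + 1), (-1) ^ i * eF i * ((n + d - i).choose (d - i) : ℤ))
    (heJ : ∀ n ≥ n0, (lJ (n + 1) : ℤ) =
      ∑ i ∈ Finset.range (d + 1), (-1) ^ i * eJ i * ((n + d - i).choose (d - i) : ℤ))
    (N : ℕ) (hstab : ∀ n ≥ N + 1, F n = J * F (n - 1)) :
    eF 1 ≤ eJ 1 + ∑ n ∈ Finset.Icc 1 N, ((lJF (n - 1) : ℤ) - (lF n : ℤ)) := by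
  classical
  -- basic filtration facts
  have hJF1 : J ≤ F 1 := by simpa [pow_one] using hadm₁ 1
  have hJFle : ∀ m, J * F m ≤ F (m+1) := by
    intro m
    refine le_trans (Ideal.mul_mono_left hJF1) ?_
    simpa [Nat.add_comm] using hFmul 1 m
  have hδ : ∀ m, lF (m+1) ≤ lJF m := fun m => idealLen_le_of_le (hJFle m) (hlJF m) (hlF (m+1))
  have hδ0 : ∀ m, N ≤ m → lJF m = lF (m+1) := by
    intro m hm
    have hst := hstab (m+1) (by omega)
    have hst' : F (m+1) = J * F m := by simpa using hst
    refine hasLength_unique (hlJF m) ?_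
    rw [← hst']
    exact hlF (m+1)
  -- main telescoping bound
  set SZ : ℤ := ∑ m ∈ Finset.range N, ((lJF m : ℤ) - (lF (m+1) : ℤ)) with hSZ
  have hSZ0 : 0 ≤ SZ := Finset.sum_nonneg (fun m _ => by
    have := hδ m; omega)
  have hmain : ∀ n, N ≤ n → (lJ (n+1) : ℤ) - (lF (n+1) : ℤ)
      ≤ (((n + d - 1).choose (d - 1) : ℕ) : ℤ) * SZ := by
    intro n hn
    -- chain of ideals
    have hex : ∀ m, ∃ v, HasLength R (R ⧸ (J ^ (n+1-m) * F m)) v := by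
      intro m
      have hsub : J ^ (n+1+m) ≤ J ^ (n+1-m) * F m := by
        calc J ^ (n+1+m) ≤ J ^ ((n+1-m)+m) := Ideal.pow_le_pow_right (by omega)
          _ = J ^ (n+1-m) * J ^ m := pow_add _ _ _
          _ ≤ J ^ (n+1-m) * F m := Ideal.mul_mono_right (hadm₁ m)
      obtain ⟨v, _, hv⟩ := idealLen_exists_of_le hsub (hlJ (n+1+m))
      exact ⟨v, hv⟩
    choose ℓ hℓ using hex
    have hend0 : ℓ 0 = lJ (n+1) := by
      have h := hℓ 0
      have heq : J ^ (n+1-0) * F 0 = J ^ (n+1) := by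
        rw [hF0, Ideal.mul_top]
        norm_num
      rw [heq] at h
      exact hasLength_unique h (hlJ (n+1))
    have hend1 : ℓ (n+1) = lF (n+1) := by
      have h := hℓ (n+1)
      have heq : J ^ (n+1-(n+1)) * F (n+1) = F (n+1) := by
        rw [Nat.sub_self, pow_zero, Ideal.one_eq_top, Ideal.top_mul]
      rw [heq] at h
      exact hasLength_unique h (hlF (n+1))
    -- per-step bound
    have hstep : ∀ m, m ≤ n → (ℓ m : ℤ) - (ℓ (m+1) : ℤ)
        ≤ (((n + d - 1).choose (d - 1) : ℕ) : ℤ)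
          * (if m < N then ((lJF m : ℤ) - (lF (m+1) : ℤ)) else 0) := by
      intro m hm
      obtain ⟨T, hT1, hT2, hT3⟩ := exists_monomial_span d hd x (n - m)
      rw [← hJ] at hT1 hT2
      -- identify B and the sup
      have hBeq : J ^ (n+1-m) * F m = (J ^ (n-m) * J) * F m := by
        have hmn : n+1-m = (n-m)+1 := by omega
        rw [hmn, pow_succ]
      have hsupeq : (J ^ (n+1-m) * F m) ⊔ Ideal.span (↑T : Set R) * F (m+1)
          = J ^ (n+1-(m+1)) * F (m+1) := by
        rw [hT2]
        have h2 : n+1-(m+1) = n - m := by omega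
        rw [h2]
        refine sup_eq_right.mpr ?_
        rw [hBeq, mul_assoc]
        exact Ideal.mul_mono_right (hJFle m)
      have hTB : ∀ t ∈ T, Ideal.span {t} * (J * F m) ≤ J ^ (n+1-m) * F m := by
        intro t ht
        have h1 : Ideal.span {t} ≤ J ^ (n - m) := by
          rw [Ideal.span_le]
          intro z hz
          rw [Set.mem_singleton_iff] at hz
          subst hz
          exact hT1 ht
        rw [hBeq, mul_assoc]
        exact Ideal.mul_mono h1 le_rfl
      have hB' : HasLength R
          (R ⧸ ((J ^ (n+1-m) * F m) ⊔ Ideal.span (↑T : Set R) * F (m+1))) (ℓ (m+1)) := by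
        rw [hsupeq]; exact hℓ (m+1)
      have hlen := lenA (hJFle m) (hlF (m+1)) (hlJF m) T (J ^ (n+1-m) * F m) hTB (hℓ m) hB'
      -- hlen : ℓ m + T.card * lF (m+1) ≤ ℓ (m+1) + T.card * lJF m
      have hcard : (T.card : ℤ) ≤ (((n + d - 1).choose (d - 1) : ℕ) : ℤ) := by
        have h1 : (n - m + d - 1).choose (d - 1) ≤ (n + d - 1).choose (d - 1) :=
          Nat.choose_le_choose _ (by omega)
        exact_mod_cast le_trans hT3 h1
      have hδm := hδ m
      have step1 : (ℓ m : ℤ) - (ℓ (m+1) : ℤ) ≤ (T.card : ℤ) * ((lJF m : ℤ) - (lF (m+1) : ℤ)) := by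
        have : (ℓ m : ℤ) + T.card * lF (m+1) ≤ (ℓ (m+1) : ℤ) + T.card * lJF m := by
          exact_mod_cast hlen
        nlinarith
      by_cases hmN : m < N
      · rw [if_pos hmN]
        refine le_trans step1 ?_
        have hpos : (0:ℤ) ≤ (lJF m : ℤ) - (lF (m+1) : ℤ) := by
          have := hδ m
          omega
        exact mul_le_mul_of_nonneg_right hcard hpos
      · rw [if_neg hmN]
        have hz : (lJF m : ℤ) - (lF (m+1) : ℤ) = 0 := by
          rw [hδ0 m (by omega)]
          ring
        rw [hz, mul_zero] at step1
        rw [mul_zero]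
        exact step1
    -- telescope
    have htel : (ℓ 0 : ℤ) - (ℓ (n+1) : ℤ)
        = ∑ m ∈ Finset.range (n+1), ((ℓ m : ℤ) - (ℓ (m+1) : ℤ)) := by
      rw [Finset.sum_range_sub' (fun m => (ℓ m : ℤ))]
    have hsum1 : ∑ m ∈ Finset.range (n+1), ((ℓ m : ℤ) - (ℓ (m+1) : ℤ))
        ≤ ∑ m ∈ Finset.range (n+1), (((n + d - 1).choose (d - 1) : ℕ) : ℤ)
          * (if m < N then ((lJF m : ℤ) - (lF (m+1) : ℤ)) else 0) := by
      refine Finset.sum_le_sum ?_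
      intro m hm
      exact hstep m (by have := Finset.mem_range.mp hm; omega)
    have hsum2 : ∑ m ∈ Finset.range (n+1), (((n + d - 1).choose (d - 1) : ℕ) : ℤ)
          * (if m < N then ((lJF m : ℤ) - (lF (m+1) : ℤ)) else 0)
        = (((n + d - 1).choose (d - 1) : ℕ) : ℤ) * SZ := by
      rw [← Finset.mul_sum]
      congr 1
      rw [hSZ]
      rw [← Finset.sum_subset (Finset.range_subset_range.mpr (by omega : N ≤ n + 1))
        (fun m _ hm => by rw [if_neg (by simpa using hm)])]
      exact Finset.sum_congr rfl (fun m hm => by rw [if_pos (Finset.mem_range.mp hm)])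
    rw [← hend0, ← hend1, htel]
    exact le_trans hsum1 (le_of_eq hsum2)
  -- numeric endgame
  set M0 := max n0 N with hM0
  have hqn : ∀ n, lF n ≤ lJ n := fun n => idealLen_le_of_le (hadm₁ n) (hlJ n) (hlF n)
  set c' : ℕ → ℤ := fun i => (-1)^i * (eJ i - eF i) with hc'
  have hsumq : ∀ n, n0 ≤ n → (lJ (n+1) : ℤ) - (lF (n+1) : ℤ)
      = ∑ i ∈ Finset.range (d+1), c' i * (((n + d - i).choose (d - i) : ℕ) : ℤ) := by
    intro n hn
    rw [heJ n hn, heF n hn, ← Finset.sum_sub_distrib]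
    exact Finset.sum_congr rfl (fun i _ => by rw [hc']; ring)
  have hA1 : 0 ≤ c' 0 := by
    apply keyD d c' M0
    intro n hn
    rw [← hsumq n (le_trans (le_max_left _ _) hn)]
    have := hqn (n+1)
    omega
  set c : ℕ → ℤ := fun i => (if i = 1 then SZ else 0) - c' i with hc
  have hA2sum : ∀ n ≥ M0, 0 ≤ ∑ i ∈ Finset.range (d+1), c i * (((n + d - i).choose (d - i) : ℕ) : ℤ) := by
    intro n hn
    have h1 : ∑ i ∈ Finset.range (d+1), c i * (((n + d - i).choose (d - i) : ℕ) : ℤ)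
        = (∑ i ∈ Finset.range (d+1), (if i = 1 then SZ else 0) * (((n + d - i).choose (d - i) : ℕ) : ℤ))
          - ∑ i ∈ Finset.range (d+1), c' i * (((n + d - i).choose (d - i) : ℕ) : ℤ) := by
      rw [← Finset.sum_sub_distrib]
      exact Finset.sum_congr rfl (fun i _ => by rw [hc]; ring)
    have h2 : (∑ i ∈ Finset.range (d+1), (if i = 1 then SZ else 0) * (((n + d - i).choose (d - i) : ℕ) : ℤ))
        = (((n + d - 1).choose (d - 1) : ℕ) : ℤ) * SZ := by
      have h3 : ∀ i ∈ Finset.range (d+1), (if i = 1 then SZ else 0) * (((n + d - i).choose (d - i) : ℕ) : ℤ)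
          = (if i = 1 then (((n + d - 1).choose (d - 1) : ℕ) : ℤ) * SZ else 0) := by
        intro i _
        by_cases hi : i = 1
        · subst hi; simp [mul_comm]
        · simp [hi]
      rw [Finset.sum_congr rfl h3, Finset.sum_ite_eq' (Finset.range (d+1)) 1]
      rw [if_pos (Finset.mem_range.mpr (by omega))]
    have h4 := hmain n (le_trans (le_max_right _ _) hn)
    rw [h1, h2, ← hsumq n (le_trans (le_max_left _ _) hn)]
    omega
  have hA2 : 0 ≤ c 0 := keyD d c M0 hA2sum
  have hczero : c 0 = 0 := by
    have h1 : c 0 = -(c' 0) := by rw [hc]; norm_num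
    omega
  have hA3 : 0 ≤ c 1 := by
    apply keyD (d-1) (fun j => c (j+1)) M0
    intro n hn
    have h := hA2sum n hn
    rw [Finset.sum_range_succ'] at h
    rw [hczero, zero_mul, add_zero] at h
    have hrw : ∀ i ∈ Finset.range d, c (i+1) * (((n + d - (i+1)).choose (d - (i+1)) : ℕ) : ℤ)
        = c (i+1) * (((n + (d-1) - i).choose ((d-1) - i) : ℕ) : ℤ) := by
      intro i hi
      have hi' := Finset.mem_range.mp hi
      have e1 : n + d - (i+1) = n + (d-1) - i := by omega
      have e2 : d - (i+1) = (d-1) - i := by omega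
      rw [e1, e2]
    rw [Finset.sum_congr rfl hrw] at h
    have hd1 : d - 1 + 1 = d := by omega
    rw [hd1]
    exact h
  have hc1 : c 1 = SZ + (eJ 1 - eF 1) := by
    rw [hc, hc']
    norm_num
    ring
  have hSrw : (∑ n ∈ Finset.Icc 1 N, ((lJF (n - 1) : ℤ) - (lF n : ℤ))) = SZ := by
    rw [hSZ, ← Finset.Ico_add_one_right_eq_Icc, Finset.sum_Ico_eq_sum_range]
    have hN1 : N + 1 - 1 = N := by omega
    rw [hN1]
    refine Finset.sum_congr rfl (fun i _ => ?_)
    have e1 : 1 + i - 1 = i := by omega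
    have e2 : 1 + i = i + 1 := by omega
    rw [e1, e2]
  rw [hSrw]
  omega
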